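/- Under the interference-alignment hypotheses, set t = ⌈r²/l⌉ and suppose 1 ≤ t < r. Let λ₀ = t + 1 + ⌊log_{r/(r−1)}((r−t)·l/r)⌋ and suppose λ₀ < k. Then every subset F ⊆ {1,…,k} with |F| = λ₀ satisfies Σ_{i∈F} rowSpace(S_i) = 𝔽^l. (That is, the standard-partition size λ satisfies λ ≤ t + 1 + ⌊log_{r/(r−1)}((r−t)·l/r)⌋.) -/

import Mathlib

open Module Submodule Matrix

section Aux

variable {𝔽 : Type*} [Field 𝔽]

lemma aux_span_range_mul {m l : ℕ} (A : Matrix (Fin m) (Fin l) 𝔽)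
    (B : Matrix (Fin l) (Fin l) 𝔽) :
    Submodule.span 𝔽 (Set.range (A * B)) =
      Submodule.map B.vecMulLinear (Submodule.span 𝔽 (Set.range A)) := by
  have h : Set.range (A * B) = B.vecMulLinear '' Set.range A := by
    have : (A * B : Matrix (Fin m) (Fin l) 𝔽) =
        (B.vecMulLinear ∘ fun i => A i : Fin m → Fin l → 𝔽) := by
      funext i j
      simp [Matrix.mul_apply, Matrix.vecMulLinear_apply, Matrix.vecMul, dotProduct]
    rw [show Set.range (A * B) = Set.range (B.vecMulLinear ∘ fun i => A i) from by rw [← this],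
      Set.range_comp]
  rw [h, Submodule.map_span]

/-- dimension bound for a sup of subspaces all containing U -/
lemma aux_rank_sup {V : Type*} [AddCommGroup V] [Module 𝔽 V] [FiniteDimensional 𝔽 V]
    {ι : Type*} [DecidableEq ι] (U : Submodule 𝔽 V) (W : ι → Submodule 𝔽 V)
    (hU : ∀ u, U ≤ W u) (s : Finset ι) :
    finrank 𝔽 (U ⊔ ⨆ u ∈ s, W u : Submodule 𝔽 V) + s.card * finrank 𝔽 U ≤
      (∑ u ∈ s, finrank 𝔽 (W u)) + finrank 𝔽 U := by
  induction s using Finset.induction_on with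
  | empty =>
    rw [show (⨆ u ∈ (∅ : Finset ι), W u) = (⊥ : Submodule 𝔽 V) from by simp, sup_bot_eq]
    simp
  | @insert j s hj ih =>
    rw [Finset.iSup_insert, Finset.sum_insert hj, Finset.card_insert_of_notMem hj]
    have hre : (U ⊔ (W j ⊔ ⨆ u ∈ s, W u)) = W j ⊔ (U ⊔ ⨆ u ∈ s, W u) := by
      rw [← sup_assoc, sup_comm U (W j), sup_assoc]
    rw [hre]
    set A := (U ⊔ ⨆ u ∈ s, W u : Submodule 𝔽 V) with hA
    have key := Submodule.finrank_sup_add_finrank_inf_eq (W j) A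
    have hUinf : U ≤ W j ⊓ A := le_inf (hU j) le_sup_left
    have hmono : finrank 𝔽 U ≤ finrank 𝔽 ↥(W j ⊓ A) := Submodule.finrank_mono hUinf
    have hring : (s.card + 1) * finrank 𝔽 U = s.card * finrank 𝔽 U + finrank 𝔽 U := by ring
    omega

lemma aux_ceil_le {r c : ℕ} (hr : 0 < r) : c ⌈/⌉ r ≤ c := by
  rw [Nat.ceilDiv_eq_add_pred_div]
  have hcr : c ≤ r * c := Nat.le_mul_of_pos_left c hr
  have h1 : c + r - 1 ≤ r * c + (r - 1) := by omega
  have h2 := Nat.div_le_div_right (c := r) h1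
  rwa [Nat.mul_add_div hr, Nat.div_eq_of_lt (show r - 1 < r from by omega), Nat.add_zero] at h2

lemma aux_le_mul_ceil {r c : ℕ} (hr : 0 < r) : c ≤ r * (c ⌈/⌉ r) := by
  rw [Nat.ceilDiv_eq_add_pred_div]
  have h := Nat.div_add_mod (c + r - 1) r
  have hm : (c + r - 1) % r < r := Nat.mod_lt _ hr
  omega

lemma aux_mono {r a b : ℕ} (hr : 0 < r) (hab : a ≤ b) :
    a - a ⌈/⌉ r ≤ b - b ⌈/⌉ r := by
  rw [Nat.ceilDiv_eq_add_pred_div, Nat.ceilDiv_eq_add_pred_div]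
  have h0 : (b - a) ≤ (b - a) * r := Nat.le_mul_of_pos_right _ hr
  have h1 : (b + r - 1) / r ≤ ((a + r - 1) + (b - a) * r) / r :=
    Nat.div_le_div_right (by omega)
  have h2 : ((a + r - 1) + (b - a) * r) / r = (a + r - 1) / r + (b - a) :=
    Nat.add_mul_div_right _ _ hr
  omega

lemma aux_step {r l a b : ℕ} (hr : 2 ≤ r) (ha : a ≤ l) (hb : b ≤ l)
    (h : l + r * a ≤ r * b + a) :
    l - b ≤ (l - a) - ((l - a) ⌈/⌉ r) := by
  have hab : a ≤ b := by
    have h1 : r * a ≤ r * b := by omega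
    exact Nat.le_of_mul_le_mul_left h1 (by omega)
  rw [Nat.ceilDiv_eq_add_pred_div]
  have h1 : l - a ≤ r * (b - a) := by
    zify [hab, ha]
    have h' : (l : ℤ) + r * a ≤ r * b + a := by exact_mod_cast h
    linarith
  have hd : (l - a + r - 1) / r < b - a + 1 := by
    rw [Nat.div_lt_iff_lt_mul (by omega : 0 < r), add_mul, one_mul, mul_comm (b - a) r]
    omega
  generalize hD : (l - a + r - 1) / r = D at hd
  omega

end Aux

set_option maxHeartbeats 1600000 in
theorem stmt_14 {𝔽 : Type*} [Field 𝔽] (k r l : ℕ)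
    (hk : 0 < k) (hr : 2 ≤ r) (hl : 0 < l) (hrl : r ∣ l)
    (S : Fin k → Matrix (Fin (l / r)) (Fin l) 𝔽)
    (C : Fin r → Fin k → Matrix (Fin l) (Fin l) 𝔽)
    (hCinv : ∀ u j, IsUnit (C u j))
    (hC1 : ∀ j, C ⟨0, by omega⟩ j = 1)
    (hIA1 : ∀ (i j : Fin k), j ≠ i → ∀ u : Fin r,
      Submodule.span 𝔽 (Set.range (S i * C u j)) = Submodule.span 𝔽 (Set.range (S i)))
    (hIA2 : ∀ i : Fin k, iSupIndep
      fun u : Fin r => Submodule.span 𝔽 (Set.range (S i * C u i)))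
    (hIA3 : ∀ i : Fin k,
      (⨆ u : Fin r, Submodule.span 𝔽 (Set.range (S i * C u i))) = ⊤)
    (t : ℕ) (ht : t = r ^ 2 ⌈/⌉ l) (ht1 : 1 ≤ t) (htr : t < r)
    (lam₀ : ℕ)
    (hlam₀ : (lam₀ : ℤ) = t + 1 +
      ⌊Real.logb ((r : ℝ) / ((r : ℝ) - 1)) (((r : ℝ) - t) * l / r)⌋)
    (hlam₀k : lam₀ < k) :
    ∀ F : Finset (Fin k), F.card = lam₀ →
      (⨆ i ∈ F, Submodule.span 𝔽 (Set.range (S i))) = ⊤ := by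
  -- Notation
  set W : Fin k → Submodule 𝔽 (Fin l → 𝔽) :=
    fun i => Submodule.span 𝔽 (Set.range (S i)) with hW
  have hrpos : 0 < r := by omega
  have hfin : finrank 𝔽 (Fin l → 𝔽) = l := Module.finrank_fin_fun 𝔽
  -- Key linear algebra step
  have key : ∀ (F : Finset (Fin k)) (j : Fin k), j ∉ F →
      l + r * finrank 𝔽 (⨆ i ∈ F, W i : Submodule 𝔽 (Fin l → 𝔽)) ≤
        r * finrank 𝔽 (⨆ i ∈ insert j F, W i : Submodule 𝔽 (Fin l → 𝔽)) +
          finrank 𝔽 (⨆ i ∈ F, W i : Submodule 𝔽 (Fin l → 𝔽)) := by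
    intro F j hj
    set U : Submodule 𝔽 (Fin l → 𝔽) := ⨆ i ∈ F, W i with hU
    -- U is invariant under each C u j
    have hMapU : ∀ u : Fin r, Submodule.map ((C u j).vecMulLinear) U = U := by
      intro u
      rw [hU, Submodule.map_iSup]
      refine iSup_congr fun i => ?_
      rw [Submodule.map_iSup]
      refine iSup_congr fun hi => ?_
      have hij : i ≠ j := fun h => hj (h ▸ hi)
      rw [← aux_span_range_mul, hIA1 i j hij.symm u]
    -- the images of W j under the encoding matrices fill up the space
    have hTop : (⨆ u : Fin r, Submodule.map ((C u j).vecMulLinear) (W j)) = ⊤ := by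
      have h := hIA3 j
      simp only [aux_span_range_mul] at h
      exact h
    -- linear equivalences from the invertible matrices
    have hb : ∀ u : Fin r,
        finrank 𝔽 (U ⊔ Submodule.map ((C u j).vecMulLinear) (W j) : Submodule 𝔽 (Fin l → 𝔽)) =
          finrank 𝔽 (U ⊔ W j : Submodule 𝔽 (Fin l → 𝔽)) := by
      intro u
      have hCu := hCinv u j
      set Cinv : Matrix (Fin l) (Fin l) 𝔽 := ↑hCu.unit⁻¹ with hCinvdef
      have h1 : Cinv * C u j = 1 := hCu.val_inv_mul
      have h2 : C u j * Cinv = 1 := hCu.mul_val_inv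
      let e : (Fin l → 𝔽) ≃ₗ[𝔽] (Fin l → 𝔽) :=
        LinearEquiv.ofLinear ((C u j).vecMulLinear) (Cinv.vecMulLinear)
          (by
            apply LinearMap.ext; intro v
            simp [Matrix.vecMulLinear_apply, Matrix.vecMul_vecMul, h1])
          (by
            apply LinearMap.ext; intro v
            simp [Matrix.vecMulLinear_apply, Matrix.vecMul_vecMul, h2])
      have hmap := LinearEquiv.finrank_map_eq e (U ⊔ W j)
      have hcoe : (e : (Fin l → 𝔽) →ₗ[𝔽] (Fin l → 𝔽)) = (C u j).vecMulLinear := rfl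
      rw [hcoe, Submodule.map_sup, hMapU u] at hmap
      exact hmap
    -- apply the sup-rank bound
    have hsup := aux_rank_sup (𝔽 := 𝔽) U
      (fun u : Fin r => (U ⊔ Submodule.map ((C u j).vecMulLinear) (W j) : Submodule 𝔽 (Fin l → 𝔽)))
      (fun u => le_sup_left) Finset.univ
    have huniv : (⨆ u ∈ (Finset.univ : Finset (Fin r)),
        (U ⊔ Submodule.map ((C u j).vecMulLinear) (W j) : Submodule 𝔽 (Fin l → 𝔽))) =
        ⨆ u : Fin r, (U ⊔ Submodule.map ((C u j).vecMulLinear) (W j) : Submodule 𝔽 (Fin l → 𝔽)) := by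
      simp
    rw [huniv] at hsup
    have htop2 : (U ⊔ ⨆ u : Fin r,
        (U ⊔ Submodule.map ((C u j).vecMulLinear) (W j) : Submodule 𝔽 (Fin l → 𝔽))) = ⊤ := by
      rw [eq_top_iff, ← hTop]
      exact le_sup_of_le_right (iSup_mono fun u => le_sup_right)
    rw [htop2] at hsup
    have hcard : (Finset.univ : Finset (Fin r)).card = r := by simp
    have hsum : (∑ u : Fin r,
        finrank 𝔽 (U ⊔ Submodule.map ((C u j).vecMulLinear) (W j) : Submodule 𝔽 (Fin l → 𝔽))) =
        r * finrank 𝔽 (U ⊔ W j : Submodule 𝔽 (Fin l → 𝔽)) := by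
      rw [Finset.sum_congr rfl (fun u _ => hb u), Finset.sum_const, hcard, smul_eq_mul]
    rw [hcard, hsum] at hsup
    have hfintop : finrank 𝔽 (⊤ : Submodule 𝔽 (Fin l → 𝔽)) = l := by
      rw [finrank_top, hfin]
    rw [hfintop] at hsup
    have hins : (⨆ i ∈ insert j F, W i : Submodule 𝔽 (Fin l → 𝔽)) = U ⊔ W j := by
      rw [Finset.iSup_insert, sup_comm]
    rw [hins]
    omega
  -- worst-case codimension recursion
  set g : ℕ → ℕ := fun c => c - c ⌈/⌉ r with hg
  have main : ∀ F : Finset (Fin k),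
      l - finrank 𝔽 (⨆ i ∈ F, W i : Submodule 𝔽 (Fin l → 𝔽)) ≤ g^[F.card] l := by
    intro F
    induction F using Finset.induction_on with
    | empty => simp
    | @insert j F hj ih =>
      rw [Finset.card_insert_of_notMem hj, Function.iterate_succ_apply']
      have hFle : finrank 𝔽 (⨆ i ∈ F, W i : Submodule 𝔽 (Fin l → 𝔽)) ≤ l :=
        le_trans (Submodule.finrank_le _) (le_of_eq hfin)
      have hIle : finrank 𝔽 (⨆ i ∈ insert j F, W i : Submodule 𝔽 (Fin l → 𝔽)) ≤ l :=
        le_trans (Submodule.finrank_le _) (le_of_eq hfin)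
      calc l - finrank 𝔽 (⨆ i ∈ insert j F, W i : Submodule 𝔽 (Fin l → 𝔽)) ≤
          (l - finrank 𝔽 (⨆ i ∈ F, W i : Submodule 𝔽 (Fin l → 𝔽))) -
            ((l - finrank 𝔽 (⨆ i ∈ F, W i : Submodule 𝔽 (Fin l → 𝔽))) ⌈/⌉ r) :=
            aux_step hr hFle hIle (key F j hj)
        _ ≤ g (g^[F.card] l) := aux_mono hrpos ih
  -- arithmetic: the recursion reaches 0 after lam₀ steps
  set β : ℕ := l / r with hβ
  have hlr : l = β * r := (Nat.div_mul_cancel hrl).symm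
  have hβ1 : 1 ≤ β := (Nat.one_le_div_iff hrpos).mpr (Nat.le_of_dvd hl hrl)
  -- t * β ≥ r and (t-1) * β < r
  have htlf : t * l ≥ r ^ 2 ∧ (t - 1) * l < r ^ 2 := by
    have hq : t = (r ^ 2 + l - 1) / l := by rw [ht, Nat.ceilDiv_eq_add_pred_div]
    have h := Nat.div_add_mod (r ^ 2 + l - 1) l
    rw [← hq] at h
    have hm : (r ^ 2 + l - 1) % l < l := Nat.mod_lt _ hl
    have hcomm : t * l = l * t := mul_comm t l
    have hsubl : (t - 1) * l = t * l - 1 * l := Nat.sub_mul t 1 l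
    rw [one_mul] at hsubl
    have hll : l ≤ t * l := Nat.le_mul_of_pos_left l (by omega)
    omega
  have htβ : r ≤ t * β := by
    have h1 : r * r ≤ (t * β) * r := by
      have := htlf.1
      rw [hlr] at this
      nlinarith [this]
    exact Nat.le_of_mul_le_mul_right h1 hrpos
  have htβ' : (t - 1) * β < r := by
    have h1 : ((t - 1) * β) * r < r * r := by
      have := htlf.2
      rw [hlr] at this
      nlinarith [this]
    exact Nat.lt_of_mul_lt_mul_right h1
  have hβ2 : 2 ≤ β := by
    by_contra hcon
    have hβeq : β = 1 := by omega
    rw [hβeq, mul_one] at htβ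
    omega
  -- stage 1: exact values for the first t steps
  have stage1 : ∀ m, m ≤ t → g^[m] l = (r - m) * β := by
    intro m
    induction m with
    | zero => intro _; simp [hlr, mul_comm]
    | succ m ih =>
      intro hm
      rw [Function.iterate_succ_apply', ih (by omega)]
      have hmβ : m * β < r :=
        lt_of_le_of_lt (Nat.mul_le_mul_right β (by omega : m ≤ t - 1)) htβ'
      have hmr : m < r := by
        calc m ≤ m * β := Nat.le_mul_of_pos_right m (by omega)
        _ < r := hmβ
      have hsub : (r - m) * β = r * β - m * β := Nat.sub_mul r m β
      have hceil : (r - m) * β ⌈/⌉ r = β := by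
        rw [Nat.ceilDiv_eq_add_pred_div]
        have h1 : m * β ≤ r * β := Nat.mul_le_mul_right β (by omega)
        have hc1 : β * r = r * β := mul_comm β r
        have hc2 : (β + 1) * r = β * r + r := by ring
        apply Nat.div_eq_of_lt_le
        · rw [hsub]; omega
        · rw [hsub]; omega
      simp only [hg]
      rw [hceil]
      have hrm : r - m = (r - (m + 1)) + 1 := by omega
      rw [hrm, add_mul, one_mul, Nat.add_sub_cancel]
  -- stage 2: geometric decay afterwards
  have stage2 : ∀ s : ℕ, (g^[t + s] l : ℝ) ≤
      ((r : ℝ) - t) * β * (((r : ℝ) - 1) / r) ^ s := by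
    intro s
    induction s with
    | zero =>
      rw [Nat.add_zero, stage1 t le_rfl, pow_zero, mul_one]
      rw [Nat.cast_mul, Nat.cast_sub (le_of_lt htr)]
    | succ s ih =>
      rw [show t + (s + 1) = (t + s) + 1 by omega, Function.iterate_succ_apply']
      set c := g^[t + s] l with hc
      have h1 : c ⌈/⌉ r ≤ c := aux_ceil_le hrpos
      have h2 : c ≤ r * (c ⌈/⌉ r) := aux_le_mul_ceil hrpos
      have hrR : (0 : ℝ) < r := by positivity
      have h3 : (c : ℝ) / r ≤ (c ⌈/⌉ r : ℕ) := by
        rw [div_le_iff₀ hrR]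
        calc (c : ℝ) ≤ (r * (c ⌈/⌉ r) : ℕ) := by exact_mod_cast h2
          _ = ((c ⌈/⌉ r : ℕ) : ℝ) * r := by push_cast; ring
      have h4 : ((g c : ℕ) : ℝ) ≤ (c : ℝ) * (((r : ℝ) - 1) / r) := by
        have : ((g c : ℕ) : ℝ) = (c : ℝ) - ((c ⌈/⌉ r : ℕ) : ℝ) := by
          rw [hg]
          push_cast [Nat.cast_sub h1]
          ring
        rw [this]
        have : (c : ℝ) * (((r : ℝ) - 1) / r) = (c : ℝ) - (c : ℝ) / r := by
          field_simp
        rw [this]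
        linarith
      calc ((g c : ℕ) : ℝ) ≤ (c : ℝ) * (((r : ℝ) - 1) / r) := h4
        _ ≤ (((r : ℝ) - t) * β * (((r : ℝ) - 1) / r) ^ s) * (((r : ℝ) - 1) / r) := by
          apply mul_le_mul_of_nonneg_right ih
          have h2r : (2 : ℝ) ≤ (r : ℝ) := by exact_mod_cast hr
          apply div_nonneg <;> linarith
        _ = ((r : ℝ) - t) * β * (((r : ℝ) - 1) / r) ^ (s + 1) := by ring
  -- conclude lam₀ steps reach 0
  set b : ℝ := (r : ℝ) / ((r : ℝ) - 1) with hbdef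
  have hrR1 : (1 : ℝ) < (r : ℝ) := by
    have : (2 : ℝ) ≤ (r : ℝ) := by exact_mod_cast hr
    linarith
  have hb1 : 1 < b := by
    rw [hbdef, one_lt_div (show (0:ℝ) < (r:ℝ) - 1 by linarith)]
    linarith
  have hxval : ((r : ℝ) - t) * l / r = ((r : ℝ) - t) * β := by
    have : (l : ℝ) = (β : ℝ) * r := by exact_mod_cast hlr
    rw [this]
    field_simp
  have hrt1 : (1 : ℝ) ≤ (r : ℝ) - t := by
    have : (t : ℝ) + 1 ≤ (r : ℝ) := by exact_mod_cast htr
    linarith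
  have hx1 : (1 : ℝ) ≤ ((r : ℝ) - t) * β := by
    have hβR : (1 : ℝ) ≤ (β : ℝ) := by exact_mod_cast hβ1
    nlinarith
  have hL0 : (0 : ℤ) ≤ ⌊Real.logb b (((r : ℝ) - t) * l / r)⌋ := by
    apply Int.floor_nonneg.mpr
    apply Real.logb_nonneg hb1
    rw [hxval]; exact hx1
  have hlamt : t + 1 ≤ lam₀ := by omega
  set s₀ : ℕ := lam₀ - t with hs₀
  have hs₀cast : (s₀ : ℤ) = ⌊Real.logb b (((r : ℝ) - t) * l / r)⌋ + 1 := by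
    rw [hs₀]; push_cast; omega
  have hlog : Real.logb b (((r : ℝ) - t) * β) < (s₀ : ℝ) := by
    have h1 : Real.logb b (((r : ℝ) - t) * l / r) < (s₀ : ℝ) := by
      have := Int.lt_floor_add_one (Real.logb b (((r : ℝ) - t) * l / r))
      have hcast : ((s₀ : ℤ) : ℝ) = (s₀ : ℝ) := by push_cast; ring
      calc Real.logb b (((r : ℝ) - t) * l / r) <
          (⌊Real.logb b (((r : ℝ) - t) * l / r)⌋ : ℝ) + 1 := this
        _ = ((s₀ : ℤ) : ℝ) := by rw [hs₀cast]; push_cast; ring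
        _ = (s₀ : ℝ) := hcast
    rwa [hxval] at h1
  have hxlt : ((r : ℝ) - t) * β < b ^ s₀ := by
    have h := (Real.logb_lt_iff_lt_rpow hb1 (by linarith : (0:ℝ) < ((r : ℝ) - t) * β)).mp hlog
    rwa [Real.rpow_natCast] at h
  have hfinal : (g^[lam₀] l : ℝ) < 1 := by
    rw [show lam₀ = t + s₀ by omega]
    refine lt_of_le_of_lt (stage2 s₀) ?_
    have hbinv : ((r : ℝ) - 1) / r = b⁻¹ := by
      rw [hbdef, inv_div]
    rw [hbinv, inv_pow, ← div_eq_mul_inv]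
    rw [div_lt_one (by positivity)]
    exact hxlt
  have hzero : g^[lam₀] l = 0 := by
    have : g^[lam₀] l < 1 := by exact_mod_cast hfinal
    omega
  -- finish
  intro F hF
  have hmF := main F
  rw [hF, hzero] at hmF
  have hFle : finrank 𝔽 (⨆ i ∈ F, W i : Submodule 𝔽 (Fin l → 𝔽)) ≤ l :=
    le_trans (Submodule.finrank_le _) (le_of_eq hfin)
  have heq : finrank 𝔽 (⨆ i ∈ F, W i : Submodule 𝔽 (Fin l → 𝔽)) = l := by omega
  exact Submodule.eq_top_of_finrank_eq (by rw [heq, hfin])
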